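/- Online gradient ascent 1/2-regret bound: Let f₁,…,f_T : X → ℝ₊ be differentiable, monotone, DR-submodular on a box X ⊇ P, with P closed convex, diam(P) = D, and ‖∇f_t(x)‖ ≤ G on P. With updates x_{t+1} = Π_P(x_t + η_t ∇f_t(x_t)), η_t = D/(G√t), we have (1/2) Σ_{t=1}^T f_t(x*) - Σ_{t=1}^T f_t(x_t) ≤ (3/4) DG√T, where x* maximizes Σ_t f_t over P. -/

import Mathlib

open Finset RealInnerProductSpace

-- MVT along a segment, gradient form
lemma grad_mvt {n : ℕ} (f : EuclideanSpace ℝ (Fin n) → ℝ) (hdiff : Differentiable ℝ f)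
    (p q : EuclideanSpace ℝ (Fin n)) :
    ∃ c ∈ Set.Ioo (0:ℝ) 1,
      f q - f p = ⟪gradient f (p + c • (q - p)), q - p⟫ := by
  set γ : ℝ → EuclideanSpace ℝ (Fin n) := fun s => p + s • (q - p) with hγ
  have hγd : ∀ s : ℝ, HasDerivAt γ (q - p) s := by
    intro s
    simpa [hγ] using ((hasDerivAt_id s).smul_const (q - p)).const_add p
  have hder : ∀ s : ℝ, HasDerivAt (fun s => f (γ s))
      (⟪gradient f (γ s), q - p⟫) s := by
    intro s
    have h1 : HasFDerivAt f (InnerProductSpace.toDual ℝ _ (gradient f (γ s))) (γ s) :=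
      ((hdiff (γ s)).hasGradientAt).hasFDerivAt
    exact h1.comp_hasDerivAt s (hγd s)
  obtain ⟨c, hc, hceq⟩ := exists_hasDerivAt_eq_slope (fun s => f (γ s))
      (fun s => ⟪gradient f (γ s), q - p⟫) one_pos
      (fun s _ => (hder s).continuousAt.continuousWithinAt) (fun s _ => hder s)
  refine ⟨c, hc, ?_⟩
  have h0 : γ 0 = p := by simp [hγ]
  have h1 : γ 1 = q := by simp [hγ]
  rw [hceq, h0, h1]
  ring

-- inner product monotone in first argument when second is componentwise nonneg
lemma inner_mono {n : ℕ} (a a' d : EuclideanSpace ℝ (Fin n))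
    (h : ∀ i, a i ≤ a' i) (hd : ∀ i, 0 ≤ d i) : ⟪a, d⟫ ≤ ⟪a', d⟫ := by
  simp only [PiLp.inner_apply, RCLike.inner_apply, conj_trivial]
  exact Finset.sum_le_sum fun i _ => mul_le_mul_of_nonneg_left (h i) (hd i)

lemma sum_inv_sqrt_le : ∀ T : ℕ, ∑ t ∈ Finset.Icc 1 T, (1 / Real.sqrt t) ≤ 2 * Real.sqrt T := by
  intro T
  induction T with
  | zero => simp
  | succ T ih =>
    rw [Finset.sum_Icc_succ_top (by omega)]
    have hs : Real.sqrt T ^ 2 = T := Real.sq_sqrt (by positivity)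
    have hu : Real.sqrt (T + 1) ^ 2 = (T : ℝ) + 1 := by
      rw [Real.sq_sqrt (by positivity)]
    have hs0 : 0 ≤ Real.sqrt T := Real.sqrt_nonneg _
    have hu0 : (0:ℝ) < Real.sqrt (T + 1) := Real.sqrt_pos.2 (by positivity)
    have key : 1 / Real.sqrt ((T:ℝ) + 1) ≤ 2 * Real.sqrt ((T:ℝ)+1) - 2 * Real.sqrt T := by
      rw [div_le_iff₀ hu0]
      nlinarith [sq_nonneg (Real.sqrt T * Real.sqrt ((T:ℝ)+1) - ((T:ℝ) + 1/2)),
        mul_nonneg hs0 hu0.le]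
    push_cast
    linarith

lemma telescope_sum (a η : ℕ → ℝ) (Dsq : ℝ)
    (ha : ∀ t, a t ≤ Dsq) (ha0 : ∀ t, 0 ≤ a t)
    (hη : ∀ t, 1 ≤ t → 0 < η t) (hmono : ∀ t, 1 ≤ t → η (t+1) ≤ η t) :
    ∀ T, 1 ≤ T → ∑ t ∈ Finset.Icc 1 T, (a t - a (t+1))/(2 * η t)
      ≤ Dsq/(2*η T) - a (T+1) / (2 * η T) := by
  intro T
  induction T with
  | zero => omega
  | succ T ih =>
    intro _
    rcases Nat.eq_zero_or_pos T with h0 | hpos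
    · subst h0
      simp only [Finset.Icc_self, Finset.sum_singleton]
      have := hη 1 le_rfl
      have := ha 1
      rw [div_sub_div_same]
      gcongr
    · rw [Finset.sum_Icc_succ_top (by omega)]
      have hT1 : (1:ℕ) ≤ T := hpos
      have h1 := ih hT1
      have hηT := hη T hT1
      have hηT1 := hη (T+1) (by omega)
      have hmT := hmono T hT1
      have key : Dsq/(2*η T) - a (T+1) / (2 * η T) + (a (T+1) - a (T+2))/(2 * η (T+1))
          ≤ Dsq/(2*η (T+1)) - a (T+2) / (2 * η (T+1)) := by
        have hc : 0 ≤ 1/(2*η (T+1)) - 1/(2*η T) := by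
          rw [sub_nonneg]
          gcongr
        have expand : Dsq/(2*η (T+1)) - a (T+2) / (2 * η (T+1))
            - (Dsq/(2*η T) - a (T+1) / (2 * η T) + (a (T+1) - a (T+2))/(2 * η (T+1)))
            = (Dsq - a (T+1)) * (1/(2*η (T+1)) - 1/(2*η T)) := by
          field_simp
          ring
        nlinarith [ha (T+1)]
      have : a (T + 1 + 1) = a (T+2) := rfl
      linarith

lemma proj_contract {n : ℕ} {P : Set (EuclideanSpace ℝ (Fin n))} (hP : Convex ℝ P)
    (z p : EuclideanSpace ℝ (Fin n)) (hp : p ∈ P)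
    (hmin : ∀ v ∈ P, ‖z - p‖ ≤ ‖z - v‖)
    (v : EuclideanSpace ℝ (Fin n)) (hv : v ∈ P) : ‖p - v‖ ≤ ‖z - v‖ := by
  haveI : Nonempty P := ⟨⟨p, hp⟩⟩
  have heq : ‖z - p‖ = ⨅ w : P, ‖z - w‖ := by
    refine le_antisymm (le_ciInf fun w => hmin w w.2) ?_
    have hbdd : BddBelow (Set.range fun w : P => ‖z - (w : EuclideanSpace ℝ (Fin n))‖) := by
      refine ⟨0, ?_⟩
      rintro r ⟨w, rfl⟩
      exact norm_nonneg _
    exact ciInf_le hbdd ⟨p, hp⟩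
  have hang : ⟪z - p, v - p⟫ ≤ 0 :=
    ((norm_eq_iInf_iff_real_inner_le_zero hP hp).1 heq) v hv
  have hexp : ‖z - v‖^2 = ‖z - p‖^2 - 2 * ⟪z - p, v - p⟫ + ‖v - p‖^2 := by
    have h : z - v = (z - p) - (v - p) := by abel
    rw [h]
    exact norm_sub_sq_real (z - p) (v - p)
  have h2 : ‖p - v‖ = ‖v - p‖ := norm_sub_rev _ _
  nlinarith [norm_nonneg (z - v), norm_nonneg (v - p), norm_nonneg (z - p), sq_nonneg (‖z - p‖)]

lemma seg_bounds {n : ℕ} (b : EuclideanSpace ℝ (Fin n))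
    (X : Set (EuclideanSpace ℝ (Fin n)))
    (hX : X = {y : EuclideanSpace ℝ (Fin n) | ∀ i, y i ∈ Set.Icc 0 (b i)})
    (f : EuclideanSpace ℝ (Fin n) → ℝ)
    (hdiff : Differentiable ℝ f)
    (hDR : ∀ x ∈ X, ∀ y ∈ X, (∀ i, x i ≤ y i) → ∀ i, gradient f y i ≤ gradient f x i)
    (p q : EuclideanSpace ℝ (Fin n)) (hp : p ∈ X) (hq : q ∈ X)
    (hpq : ∀ i, p i ≤ q i) :
    ⟪gradient f q, q - p⟫ ≤ f q - f p ∧ f q - f p ≤ ⟪gradient f p, q - p⟫ := by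
  obtain ⟨c, hc, hceq⟩ := grad_mvt f hdiff p q
  set w : EuclideanSpace ℝ (Fin n) := p + c • (q - p) with hw
  have hwi : ∀ i, w i = p i + c * (q i - p i) := by
    intro i
    simp [hw, PiLp.add_apply, PiLp.smul_apply, PiLp.sub_apply, smul_eq_mul]
  have hpw : ∀ i, p i ≤ w i := fun i => by
    rw [hwi i]; nlinarith [hpq i, hc.1, hc.2]
  have hwq : ∀ i, w i ≤ q i := fun i => by
    rw [hwi i]; nlinarith [hpq i, hc.1, hc.2]
  have hwX : w ∈ X := by
    rw [hX]; intro i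
    have h1 := (hX ▸ hp) i
    have h2 := (hX ▸ hq) i
    exact ⟨le_trans h1.1 (hpw i), le_trans (hwq i) h2.2⟩
  have hd : ∀ i, 0 ≤ (q - p) i := fun i => by
    simp only [PiLp.sub_apply]; linarith [hpq i]
  constructor
  · rw [hceq]
    exact inner_mono _ _ _ (hDR w hwX q hq hwq) hd
  · rw [hceq]
    exact inner_mono _ _ _ (hDR p hp w hwX hpw) hd

lemma dr_key {n : ℕ} (b : EuclideanSpace ℝ (Fin n))
    (X : Set (EuclideanSpace ℝ (Fin n)))
    (hX : X = {y : EuclideanSpace ℝ (Fin n) | ∀ i, y i ∈ Set.Icc 0 (b i)})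
    (f : EuclideanSpace ℝ (Fin n) → ℝ)
    (hdiff : Differentiable ℝ f)
    (hnonneg : ∀ x ∈ X, 0 ≤ f x)
    (hmono : ∀ x ∈ X, ∀ y ∈ X, (∀ i, x i ≤ y i) → f x ≤ f y)
    (hDR : ∀ x ∈ X, ∀ y ∈ X, (∀ i, x i ≤ y i) → ∀ i, gradient f y i ≤ gradient f x i)
    (x y : EuclideanSpace ℝ (Fin n)) (hx : x ∈ X) (hy : y ∈ X) :
    f y - 2 * f x ≤ ⟪gradient f x, y - x⟫ := by
  set u : EuclideanSpace ℝ (Fin n) :=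
    (WithLp.equiv 2 (Fin n → ℝ)).symm (fun i => max (x i) (y i)) with hu
  set v : EuclideanSpace ℝ (Fin n) :=
    (WithLp.equiv 2 (Fin n → ℝ)).symm (fun i => min (x i) (y i)) with hv
  have hui : ∀ i, u i = max (x i) (y i) := fun i => rfl
  have hvi : ∀ i, v i = min (x i) (y i) := fun i => rfl
  have hxX := hX ▸ hx
  have hyX := hX ▸ hy
  have huX : u ∈ X := by
    rw [hX]; intro i; rw [hui i]
    exact ⟨le_max_of_le_left (hxX i).1, max_le (hxX i).2 (hyX i).2⟩
  have hvX : v ∈ X := by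
    rw [hX]; intro i; rw [hvi i]
    exact ⟨le_min (hxX i).1 (hyX i).1, min_le_of_left_le (hxX i).2⟩
  have hxu : ∀ i, x i ≤ u i := fun i => (hui i) ▸ le_max_left _ _
  have hyu : ∀ i, y i ≤ u i := fun i => (hui i) ▸ le_max_right _ _
  have hvx : ∀ i, v i ≤ x i := fun i => (hvi i) ▸ min_le_left _ _
  have hsplit : y - x = (u - x) - (x - v) := by
    ext i
    simp only [PiLp.sub_apply, hui i, hvi i]
    have := max_add_min (x i) (y i)
    linarith
  have h1 := seg_bounds b X hX f hdiff hDR x u hx huX hxu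
  have h2 := seg_bounds b X hX f hdiff hDR v x hvX hx hvx
  have hinner : ⟪gradient f x, y - x⟫ = ⟪gradient f x, u - x⟫ - ⟪gradient f x, x - v⟫ := by
    rw [hsplit, inner_sub_right]
  have hfy : f y ≤ f u := hmono y hy u huX hyu
  have hfv : 0 ≤ f v := hnonneg v hvX
  linarith [h1.2, h2.1]
set_option maxHeartbeats 1600000 in
/-- Online (projected) gradient ascent regret bound for monotone DR-submodular
functions: `(1/2) Σ f_t(x*) - Σ f_t(x_t) ≤ (3/4) DG√T`. -/
theorem online_gradient_ascent_half_regret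
    {n : ℕ} (T : ℕ) (hT : 1 ≤ T)
    (b : EuclideanSpace ℝ (Fin n)) (hb : ∀ i, 0 ≤ b i)
    (X : Set (EuclideanSpace ℝ (Fin n)))
    (hX : X = {y : EuclideanSpace ℝ (Fin n) | ∀ i, y i ∈ Set.Icc 0 (b i)})
    (P : Set (EuclideanSpace ℝ (Fin n)))
    (hPX : P ⊆ X) (hPne : P.Nonempty) (hPclosed : IsClosed P) (hPconvex : Convex ℝ P)
    (D G : ℝ) (hD : Metric.diam P = D) (hG : 0 < G)
    (f : ℕ → EuclideanSpace ℝ (Fin n) → ℝ)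
    (hdiff : ∀ t, Differentiable ℝ (f t))
    (hnonneg : ∀ t, ∀ x ∈ X, 0 ≤ f t x)
    (hmono : ∀ t, ∀ x ∈ X, ∀ y ∈ X, (∀ i, x i ≤ y i) → f t x ≤ f t y)
    (hDR : ∀ t, ∀ x ∈ X, ∀ y ∈ X, (∀ i, x i ≤ y i) →
      ∀ i, gradient (f t) y i ≤ gradient (f t) x i)
    (hgradbound : ∀ t ∈ Finset.Icc 1 T, ∀ x ∈ P, ‖gradient (f t) x‖ ≤ G)
    (η : ℕ → ℝ) (hη : ∀ t, η t = D / (G * Real.sqrt t))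
    (x : ℕ → EuclideanSpace ℝ (Fin n)) (hx1 : x 1 ∈ P)
    (hupdate : ∀ t ∈ Finset.Icc 1 T,
      x (t + 1) ∈ P ∧
      ∀ v ∈ P, ‖x t + η t • gradient (f t) (x t) - x (t + 1)‖ ≤
        ‖x t + η t • gradient (f t) (x t) - v‖)
    (xstar : EuclideanSpace ℝ (Fin n)) (hxstar : xstar ∈ P)
    (hopt : ∀ y ∈ P, ∑ t ∈ Finset.Icc 1 T, f t y ≤ ∑ t ∈ Finset.Icc 1 T, f t xstar) :
    (1 / 2 : ℝ) * ∑ t ∈ Finset.Icc 1 T, f t xstar -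
        ∑ t ∈ Finset.Icc 1 T, f t (x t) ≤
      3 / 4 * (D * G * Real.sqrt T) := by
  -- membership of iterates
  have hmem : ∀ t, 1 ≤ t → t ≤ T + 1 → x t ∈ P := by
    intro t
    induction t with
    | zero => omega
    | succ t ih =>
      intro _ ht2
      rcases Nat.eq_zero_or_pos t with h0 | hpos
      · subst h0; exact hx1
      · exact (hupdate t (Finset.mem_Icc.2 ⟨hpos, by omega⟩)).1
  -- P is bounded
  have hPbdd : Bornology.IsBounded P := by
    have hsub : P ⊆ Metric.closedBall 0 ‖b‖ := by
      intro y hy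
      have hyX := hX ▸ hPX hy
      rw [Metric.mem_closedBall, dist_zero_right]
      rw [EuclideanSpace.norm_eq, EuclideanSpace.norm_eq]
      apply Real.sqrt_le_sqrt
      apply Finset.sum_le_sum
      intro i _
      have h1 := (hyX i).1
      have h2 := (hyX i).2
      have hb' := hb i
      simp only [Real.norm_eq_abs, sq_abs]
      nlinarith
    exact Metric.isBounded_closedBall.subset hsub
  have hdistD : ∀ p ∈ P, ∀ q ∈ P, dist p q ≤ D :=
    fun p hp q hq => hD ▸ Metric.dist_le_diam_of_mem hPbdd hp hq
  have hD0 : 0 ≤ D := hD ▸ Metric.diam_nonneg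
  have hsqrtT : (0:ℝ) < Real.sqrt T := Real.sqrt_pos.2 (by exact_mod_cast hT)
  rcases eq_or_lt_of_le hD0 with hDeq | hDpos
  · -- degenerate case D = 0 : P is a single point
    have hsing : ∀ p ∈ P, p = xstar := by
      intro p hp
      have := hdistD p hp xstar hxstar
      rw [← hDeq] at this
      exact dist_le_zero.1 this
    have hsum : ∑ t ∈ Finset.Icc 1 T, f t (x t) = ∑ t ∈ Finset.Icc 1 T, f t xstar := by
      apply Finset.sum_congr rfl
      intro t ht
      obtain ⟨h1, h2⟩ := Finset.mem_Icc.1 ht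
      rw [hsing (x t) (hmem t h1 (by omega))]
    have hS : 0 ≤ ∑ t ∈ Finset.Icc 1 T, f t xstar :=
      Finset.sum_nonneg fun t _ => hnonneg t xstar (hPX hxstar)
    rw [hsum, ← hDeq]
    simp
    linarith
  · -- main case D > 0
    set g : ℕ → EuclideanSpace ℝ (Fin n) := fun t => gradient (f t) (x t) with hg
    have hηpos : ∀ t : ℕ, 1 ≤ t → 0 < η t := by
      intro t ht
      rw [hη]
      have : (0:ℝ) < Real.sqrt t := Real.sqrt_pos.2 (by exact_mod_cast ht)
      positivity
    have hηmono : ∀ t : ℕ, 1 ≤ t → η (t + 1) ≤ η t := by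
      intro t ht
      rw [hη, hη]
      have h1 : (0:ℝ) < Real.sqrt t := Real.sqrt_pos.2 (by exact_mod_cast ht)
      have h2 : Real.sqrt t ≤ Real.sqrt (t + 1) := by
        apply Real.sqrt_le_sqrt; push_cast; linarith
      have : (((t:ℕ) + 1 : ℕ) : ℝ) = (t:ℝ) + 1 := by push_cast; ring
      rw [this]
      gcongr
    set A : ℕ → ℝ := fun t => ‖x (max 1 (min t (T+1))) - xstar‖^2 with hA
    have hAval : ∀ t, 1 ≤ t → t ≤ T + 1 → A t = ‖x t - xstar‖^2 := by
      intro t h1 h2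
      have : max 1 (min t (T+1)) = t := by omega
      rw [hA]; simp only; rw [this]
    have hAle : ∀ t, A t ≤ D^2 := by
      intro t
      have hm : x (max 1 (min t (T+1))) ∈ P := hmem _ (by omega) (by omega)
      have := hdistD _ hm xstar hxstar
      rw [dist_eq_norm] at this
      have hn : (0:ℝ) ≤ ‖x (max 1 (min t (T+1))) - xstar‖ := norm_nonneg _
      rw [hA]; simp only
      nlinarith
    have hA0 : ∀ t, 0 ≤ A t := fun t => sq_nonneg _
    -- per-step inequality
    have hstep : ∀ t ∈ Finset.Icc 1 T,
        ⟪g t, xstar - x t⟫ ≤ (A t - A (t+1))/(2 * η t) + η t * G^2 / 2 := by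
      intro t ht
      obtain ⟨ht1, ht2⟩ := Finset.mem_Icc.1 ht
      have hxtP : x t ∈ P := hmem t ht1 (by omega)
      have hxt1P := (hupdate t ht).1
      have hcontract := proj_contract hPconvex (x t + η t • g t) (x (t+1)) hxt1P
        (hupdate t ht).2 xstar hxstar
      have hsplit : x t + η t • g t - xstar = (x t - xstar) + η t • g t := by abel
      have hexp : ‖x t + η t • g t - xstar‖^2
          = ‖x t - xstar‖^2 + 2 * (η t * ⟪x t - xstar, g t⟫) + (η t)^2 * ‖g t‖^2 := by
        rw [hsplit, norm_add_sq_real, real_inner_smul_right, norm_smul,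
          Real.norm_eq_abs, abs_of_pos (hηpos t ht1)]
        ring
      have hgb : ‖g t‖ ≤ G := hgradbound t ht (x t) hxtP
      have hgb0 : 0 ≤ ‖g t‖ := norm_nonneg _
      have hAt : A t = ‖x t - xstar‖^2 := hAval t ht1 (by omega)
      have hAt1 : A (t+1) = ‖x (t+1) - xstar‖^2 := hAval (t+1) (by omega) (by omega)
      have hkey : A (t+1) ≤ A t + 2 * (η t * ⟪x t - xstar, g t⟫) + (η t)^2 * G^2 := by
        rw [hAt, hAt1]
        have hc2 : ‖x (t+1) - xstar‖^2 ≤ ‖x t + η t • g t - xstar‖^2 := by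
          have := norm_nonneg (x (t+1) - xstar)
          nlinarith
        rw [hexp] at hc2
        have hη2 : (0:ℝ) ≤ (η t)^2 := sq_nonneg _
        have hgsq : ‖g t‖^2 ≤ G^2 := by nlinarith
        nlinarith [mul_le_mul_of_nonneg_left hgsq hη2]
      have hip : ⟪g t, xstar - x t⟫ = -⟪x t - xstar, g t⟫ := by
        rw [show xstar - x t = -(x t - xstar) by abel, inner_neg_right, real_inner_comm]
      have hηt := hηpos t ht1
      rw [hip]
      have hform : (A t - A (t+1))/(2 * η t) + η t * G^2 / 2 + ⟪x t - xstar, g t⟫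
          = ((A t - A (t+1)) + (η t)^2 * G^2 + 2 * (η t * ⟪x t - xstar, g t⟫))/(2 * η t) := by
        field_simp
      have hnum : 0 ≤ (A t - A (t+1)) + (η t)^2 * G^2 + 2 * (η t * ⟪x t - xstar, g t⟫) := by
        linarith
      have hpos2 : (0:ℝ) < 2 * η t := by linarith
      have hdiv := div_nonneg hnum hpos2.le
      rw [← hform] at hdiv
      linarith
    -- sum the per-step inequalities
    have hsum1 : ∑ t ∈ Finset.Icc 1 T, ⟪g t, xstar - x t⟫
        ≤ ∑ t ∈ Finset.Icc 1 T, ((A t - A (t+1))/(2 * η t)) +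
          ∑ t ∈ Finset.Icc 1 T, (η t * G^2 / 2) := by
      rw [← Finset.sum_add_distrib]
      exact Finset.sum_le_sum hstep
    have htel := telescope_sum A η (D^2) hAle hA0 hηpos hηmono T hT
    have hηT := hηpos T hT
    have htel2 : ∑ t ∈ Finset.Icc 1 T, ((A t - A (t+1))/(2 * η t)) ≤ D^2/(2 * η T) := by
      have := hA0 (T+1)
      have : 0 ≤ A (T+1) / (2 * η T) := div_nonneg this (by linarith)
      linarith
    have hval : D^2/(2 * η T) = D * G * Real.sqrt T / 2 := by
      rw [hη]
      field_simp
    have hsum2 : ∑ t ∈ Finset.Icc 1 T, (η t * G^2 / 2) ≤ D * G * Real.sqrt T := by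
      have heq : ∑ t ∈ Finset.Icc 1 T, (η t * G^2 / 2)
          = (D * G / 2) * ∑ t ∈ Finset.Icc 1 T, (1 / Real.sqrt t) := by
        rw [Finset.mul_sum]
        apply Finset.sum_congr rfl
        intro t ht
        have ht1 := (Finset.mem_Icc.1 ht).1
        have hst : (0:ℝ) < Real.sqrt t := Real.sqrt_pos.2 (by exact_mod_cast ht1)
        rw [hη]
        field_simp
      rw [heq]
      have := sum_inv_sqrt_le T
      calc (D * G / 2) * ∑ t ∈ Finset.Icc 1 T, (1 / Real.sqrt t)
          ≤ (D * G / 2) * (2 * Real.sqrt T) := by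
            apply mul_le_mul_of_nonneg_left this (by positivity)
        _ = D * G * Real.sqrt T := by ring
    have hinner_total : ∑ t ∈ Finset.Icc 1 T, ⟪g t, xstar - x t⟫
        ≤ 3/2 * (D * G * Real.sqrt T) := by
      calc ∑ t ∈ Finset.Icc 1 T, ⟪g t, xstar - x t⟫
          ≤ ∑ t ∈ Finset.Icc 1 T, ((A t - A (t+1))/(2 * η t)) +
            ∑ t ∈ Finset.Icc 1 T, (η t * G^2 / 2) := hsum1
        _ ≤ D^2/(2 * η T) + D * G * Real.sqrt T := by linarith
        _ = 3/2 * (D * G * Real.sqrt T) := by rw [hval]; ring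
    -- DR-submodular inequality per step
    have hdr : ∀ t ∈ Finset.Icc 1 T,
        f t xstar - 2 * f t (x t) ≤ ⟪g t, xstar - x t⟫ := by
      intro t ht
      obtain ⟨h1, h2⟩ := Finset.mem_Icc.1 ht
      have hxtP : x t ∈ P := hmem t h1 (by omega)
      exact dr_key b X hX (f t) (hdiff t) (hnonneg t) (hmono t) (hDR t)
        (x t) xstar (hPX hxtP) (hPX hxstar)
    have hdrsum : ∑ t ∈ Finset.Icc 1 T, f t xstar - 2 * ∑ t ∈ Finset.Icc 1 T, f t (x t)
        ≤ ∑ t ∈ Finset.Icc 1 T, ⟪g t, xstar - x t⟫ := by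
      rw [Finset.mul_sum, ← Finset.sum_sub_distrib]
      exact Finset.sum_le_sum hdr
    linarith
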